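/- arXiv:1704.04465 — 2 statements merged into one kernel-verified Lean document; each statement's English description precedes it below -/
import Mathlib

section
/- Round-robin convergence bound: let ε > 0 and let (B_t)_{t≥0} be a sequence of feasible profiles such that, for each t ≥ 0, B_{t+1} differs from B_t at most in the placement of cache m_t = (t mod N) + 1, the new placement b^(m_t) of B_{t+1} minimizes f^(m_t)(·, B_t^(−m_t)) over feasible placements, and B_{t+1} = B_t whenever the placement of cache m_t in B_t is already such a minimizer. Assume that every strict decrease of f along the sequence is at least ε. Then there exists T ≤ N·(⌈1/ε⌉ + 1) such that B_T is a Nash equilibrium. -/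
open Finset

/-- `qm p B m j` = Σ_{s ∋ m} p_s Π_{ℓ ∈ s \ {m}} (1 - b^(ℓ)_j). -/
noncomputable def qm {N J : ℕ} (p : Finset (Fin N) → ℝ) (B : Fin N → Fin J → ℝ)
    (m : Fin N) (j : Fin J) : ℝ :=
  ∑ s ∈ Finset.univ.filter (fun s : Finset (Fin N) => m ∈ s),
    p s * ∏ ℓ ∈ s.erase m, (1 - B ℓ j)

/-- Miss probability f(B) = Σ_j a_j Σ_{s ≠ ∅} p_s Π_{ℓ ∈ s} (1 - b^(ℓ)_j). -/
noncomputable def missProb {N J : ℕ} (a : Fin J → ℝ) (p : Finset (Fin N) → ℝ)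
    (B : Fin N → Fin J → ℝ) : ℝ :=
  ∑ j, a j * ∑ s ∈ Finset.univ.filter (fun s : Finset (Fin N) => s.Nonempty),
    p s * ∏ ℓ ∈ s, (1 - B ℓ j)

/-- Local miss probability f^(m)(B) = Σ_j a_j (1 - b^(m)_j) q_m(j). -/
noncomputable def localMiss {N J : ℕ} (a : Fin J → ℝ) (p : Finset (Fin N) → ℝ)
    (B : Fin N → Fin J → ℝ) (m : Fin N) : ℝ :=
  ∑ j, a j * (1 - B m j) * qm p B m j

/-- A feasible placement: a 0/1 vector over the J files with exactly K ones. -/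
def IsPlacement {J : ℕ} (K : ℕ) (b : Fin J → ℝ) : Prop :=
  (∀ j, b j = 0 ∨ b j = 1) ∧ ∑ j, b j = (K : ℝ)

/-- The cache scheduled at time t under round-robin scheduling (cache (t mod N) + 1 in
1-based numbering, i.e. index t mod N in Fin N). -/
def rrCache (N : ℕ) (hN : 0 < N) (t : ℕ) : Fin N := ⟨t % N, Nat.mod_lt t hN⟩

lemma miss_decomp {N J : ℕ} (a : Fin J → ℝ) (p : Finset (Fin N) → ℝ)
    (B : Fin N → Fin J → ℝ) (m : Fin N) :
    missProb a p B = localMiss a p B m +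
      ∑ j, a j * ∑ s ∈ Finset.univ.filter
          (fun s : Finset (Fin N) => s.Nonempty ∧ m ∉ s),
        p s * ∏ ℓ ∈ s, (1 - B ℓ j) := by
  unfold missProb localMiss
  rw [← Finset.sum_add_distrib]
  refine Finset.sum_congr rfl fun j _ => ?_
  have hsplit : ∑ s ∈ Finset.univ.filter (fun s : Finset (Fin N) => s.Nonempty),
      p s * ∏ ℓ ∈ s, (1 - B ℓ j)
      = (∑ s ∈ Finset.univ.filter (fun s : Finset (Fin N) => m ∈ s),
          p s * ∏ ℓ ∈ s, (1 - B ℓ j))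
      + ∑ s ∈ Finset.univ.filter (fun s : Finset (Fin N) => s.Nonempty ∧ m ∉ s),
          p s * ∏ ℓ ∈ s, (1 - B ℓ j) := by
    rw [← Finset.sum_filter_add_sum_filter_not
      (Finset.univ.filter (fun s : Finset (Fin N) => s.Nonempty)) (fun s => m ∈ s)]
    congr 1
    · congr 1
      ext s
      simp only [Finset.mem_filter, Finset.mem_univ, true_and]
      exact ⟨fun h => h.2, fun h => ⟨⟨m, h⟩, h⟩⟩
    · congr 1
      ext s
      simp [Finset.mem_filter, and_comm]
  rw [hsplit, mul_add]
  congr 1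
  have : ∀ s ∈ Finset.univ.filter (fun s : Finset (Fin N) => m ∈ s),
      p s * ∏ ℓ ∈ s, (1 - B ℓ j) = (1 - B m j) * (p s * ∏ ℓ ∈ s.erase m, (1 - B ℓ j)) := by
    intro s hs
    rw [Finset.mem_filter] at hs
    rw [← Finset.mul_prod_erase s _ hs.2]
    ring
  rw [Finset.sum_congr rfl this, ← Finset.mul_sum]
  unfold qm
  ring

lemma miss_diff {N J : ℕ} (a : Fin J → ℝ) (p : Finset (Fin N) → ℝ)
    {B1 B2 : Fin N → Fin J → ℝ} (m : Fin N) (h : ∀ ℓ, ℓ ≠ m → B1 ℓ = B2 ℓ) :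
    missProb a p B1 - missProb a p B2 = localMiss a p B1 m - localMiss a p B2 m := by
  rw [miss_decomp a p B1 m, miss_decomp a p B2 m]
  have : ∀ j : Fin J,
      (∑ s ∈ Finset.univ.filter (fun s : Finset (Fin N) => s.Nonempty ∧ m ∉ s),
        p s * ∏ ℓ ∈ s, (1 - B1 ℓ j))
      = ∑ s ∈ Finset.univ.filter (fun s : Finset (Fin N) => s.Nonempty ∧ m ∉ s),
        p s * ∏ ℓ ∈ s, (1 - B2 ℓ j) := by
    intro j
    refine Finset.sum_congr rfl fun s hs => ?_
    rw [Finset.mem_filter] at hs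
    congr 1
    refine Finset.prod_congr rfl fun ℓ hℓ => ?_
    rw [h ℓ (fun he => hs.2.2 (he ▸ hℓ))]
  simp only [this]
  ring

lemma miss_bounds {N J K : ℕ} (a : Fin J → ℝ) (ha : ∀ j, 0 ≤ a j) (hasum : ∑ j, a j = 1)
    (p : Finset (Fin N) → ℝ) (hp : ∀ s, 0 ≤ p s)
    (hpsum : ∑ s ∈ Finset.univ.filter (fun s : Finset (Fin N) => s.Nonempty), p s = 1)
    (B : Fin N → Fin J → ℝ) (hB : ∀ m, IsPlacement K (B m)) :
    0 ≤ missProb a p B ∧ missProb a p B ≤ 1 := by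
  have hfac : ∀ ℓ j, 0 ≤ 1 - B ℓ j ∧ 1 - B ℓ j ≤ 1 := by
    intro ℓ j
    rcases (hB ℓ).1 j with h | h <;> rw [h] <;> norm_num
  have hprod0 : ∀ (s : Finset (Fin N)) (j : Fin J), 0 ≤ ∏ ℓ ∈ s, (1 - B ℓ j) :=
    fun s j => Finset.prod_nonneg fun ℓ _ => (hfac ℓ j).1
  have hprod1 : ∀ (s : Finset (Fin N)) (j : Fin J), ∏ ℓ ∈ s, (1 - B ℓ j) ≤ 1 :=
    fun s j => Finset.prod_le_one (fun ℓ _ => (hfac ℓ j).1) (fun ℓ _ => (hfac ℓ j).2)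
  constructor
  · apply Finset.sum_nonneg
    intro j _
    exact mul_nonneg (ha j) (Finset.sum_nonneg fun s _ => mul_nonneg (hp s) (hprod0 s j))
  · calc missProb a p B ≤ ∑ j, a j * 1 := by
          apply Finset.sum_le_sum
          intro j _
          apply mul_le_mul_of_nonneg_left _ (ha j)
          calc (∑ s ∈ Finset.univ.filter (fun s : Finset (Fin N) => s.Nonempty),
                p s * ∏ ℓ ∈ s, (1 - B ℓ j))
              ≤ ∑ s ∈ Finset.univ.filter (fun s : Finset (Fin N) => s.Nonempty), p s := by
                apply Finset.sum_le_sum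
                intro s _
                calc p s * ∏ ℓ ∈ s, (1 - B ℓ j) ≤ p s * 1 :=
                      mul_le_mul_of_nonneg_left (hprod1 s j) (hp s)
                  _ = p s := mul_one _
            _ = 1 := hpsum
      _ = 1 := by simp [hasum]

/-- round-robin best response dynamics, with lazy updates and all strict
decreases of the miss probability at least ε, reaches a Nash equilibrium within
N·(⌈1/ε⌉ + 1) steps. -/
theorem round_robin_convergence (N J K : ℕ) (hN : 0 < N) (hK1 : 1 ≤ K) (hKJ : K ≤ J)
    (a : Fin J → ℝ) (ha : ∀ j, 0 ≤ a j) (hasum : ∑ j, a j = 1)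
    (p : Finset (Fin N) → ℝ) (hp : ∀ s, 0 ≤ p s)
    (hpsum : ∑ s ∈ Finset.univ.filter (fun s : Finset (Fin N) => s.Nonempty), p s = 1)
    (ε : ℝ) (hε : 0 < ε)
    (B : ℕ → Fin N → Fin J → ℝ)
    (hfeas : ∀ t m, IsPlacement K (B t m))
    (hupd : ∀ t, ∀ ℓ, ℓ ≠ rrCache N hN t → B (t + 1) ℓ = B t ℓ)
    (hbr : ∀ t, ∀ btilde : Fin J → ℝ, IsPlacement K btilde →
      localMiss a p (B (t + 1)) (rrCache N hN t) ≤
        localMiss a p (Function.update (B t) (rrCache N hN t) btilde) (rrCache N hN t))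
    (hlazy : ∀ t, (∀ btilde : Fin J → ℝ, IsPlacement K btilde →
        localMiss a p (B t) (rrCache N hN t) ≤
          localMiss a p (Function.update (B t) (rrCache N hN t) btilde) (rrCache N hN t)) →
      B (t + 1) = B t)
    (hstep : ∀ t, missProb a p (B (t + 1)) < missProb a p (B t) →
      ε ≤ missProb a p (B t) - missProb a p (B (t + 1))) :
    ∃ T ≤ N * (⌈1 / ε⌉₊ + 1), ∀ m : Fin N, ∀ btilde : Fin J → ℝ, IsPlacement K btilde →
      localMiss a p (B T) m ≤ localMiss a p (Function.update (B T) m btilde) m := by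
  set f : ℕ → ℝ := fun t => missProb a p (B t) with hf
  -- difference identity for each step
  have hdiff : ∀ t, f (t + 1) - f t =
      localMiss a p (B (t + 1)) (rrCache N hN t) - localMiss a p (B t) (rrCache N hN t) :=
    fun t => miss_diff a p (rrCache N hN t) (hupd t)
  -- one-step monotonicity
  have hmono : ∀ t, f (t + 1) ≤ f t := by
    intro t
    have h1 : localMiss a p (B (t + 1)) (rrCache N hN t)
        ≤ localMiss a p (B t) (rrCache N hN t) := by
      have := hbr t (B t (rrCache N hN t)) (hfeas t (rrCache N hN t))
      rwa [Function.update_eq_self] at this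
    linarith [hdiff t]
  have hmono' : ∀ s t : ℕ, s ≤ t → f t ≤ f s := fun s t h =>
    (antitone_nat_of_succ_le hmono) h
  have hbnd : ∀ t, 0 ≤ f t ∧ f t ≤ 1 := fun t =>
    miss_bounds a ha hasum p hp hpsum (B t) (hfeas t)
  set C := ⌈1 / ε⌉₊ with hC
  -- there is a flat block
  have key : ∃ i ≤ C, ∀ t, i * N ≤ t → t < (i + 1) * N → f (t + 1) = f t := by
    by_contra hcon
    push_neg at hcon
    have hdrop : ∀ i, i ≤ C → f ((i + 1) * N) ≤ f (i * N) - ε := by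
      intro i hi
      obtain ⟨t, ht1, ht2, ht3⟩ := hcon i hi
      have hlt : f (t + 1) < f t := lt_of_le_of_ne (hmono t) ht3
      have hε' := hstep t hlt
      have h1 : f ((i + 1) * N) ≤ f (t + 1) := hmono' _ _ ht2
      have h2 : f t ≤ f (i * N) := hmono' _ _ ht1
      simp only [hf] at *
      linarith
    have hiter : ∀ i, i ≤ C + 1 → f (i * N) ≤ f 0 - i * ε := by
      intro i
      induction i with
      | zero => intro _; simp
      | succ k ih =>
        intro hk
        have hk' : k ≤ C := Nat.lt_succ_iff.mp (Nat.lt_of_lt_of_le (Nat.lt_succ_self k) hk)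
        have h1 := hdrop k hk'
        have h2 := ih (le_trans hk' (Nat.le_succ C))
        push_cast
        linarith
    have hfin := hiter (C + 1) le_rfl
    have hCe : (1 : ℝ) ≤ (C : ℝ) * ε := by
      have h1 : (1 : ℝ) / ε ≤ (C : ℝ) := Nat.le_ceil (1 / ε)
      have := mul_le_mul_of_nonneg_right h1 hε.le
      rwa [one_div_mul_cancel hε.ne'] at this
    have h0 := (hbnd ((C + 1) * N)).1
    have h1 := (hbnd 0).2
    push_cast at hfin
    nlinarith
  obtain ⟨i, hiC, hflat⟩ := key
  -- within the flat block, the lazy rule freezes B and each scheduled cache best-responds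
  have hclaim : ∀ t, i * N ≤ t → t < (i + 1) * N →
      B (t + 1) = B t ∧ (∀ btilde : Fin J → ℝ, IsPlacement K btilde →
        localMiss a p (B t) (rrCache N hN t) ≤
          localMiss a p (Function.update (B t) (rrCache N hN t) btilde) (rrCache N hN t)) := by
    intro t ht1 ht2
    have heq : localMiss a p (B (t + 1)) (rrCache N hN t)
        = localMiss a p (B t) (rrCache N hN t) := by
      have := hdiff t
      rw [hflat t ht1 ht2] at this
      linarith
    have hbrt : ∀ btilde : Fin J → ℝ, IsPlacement K btilde →
        localMiss a p (B t) (rrCache N hN t) ≤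
          localMiss a p (Function.update (B t) (rrCache N hN t) btilde) (rrCache N hN t) := by
      intro btilde hbt
      rw [← heq]
      exact hbr t btilde hbt
    exact ⟨hlazy t hbrt, hbrt⟩
  -- B is constant on the block
  have hconst : ∀ k, k ≤ N → B (i * N + k) = B (i * N) := by
    intro k
    induction k with
    | zero => intro _; rfl
    | succ k ih =>
      intro hk
      have hk' : k < N := hk
      have hb := hclaim (i * N + k) (Nat.le_add_right _ _) (by
        have : (i + 1) * N = i * N + N := by ring
        omega)
      rw [show i * N + (k + 1) = (i * N + k) + 1 from rfl, hb.1, ih hk'.le]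
  refine ⟨i * N, ?_, ?_⟩
  · calc i * N ≤ C * N := Nat.mul_le_mul_right N hiC
      _ ≤ N * (C + 1) := by rw [Nat.mul_comm]; exact Nat.mul_le_mul_left N (Nat.le_succ C)
  · intro m btilde hbt
    set t := i * N + m.val with htdef
    have ht2 : t < (i + 1) * N := by
      have : (i + 1) * N = i * N + N := by ring
      have := m.isLt
      omega
    have hm : rrCache N hN t = m := by
      apply Fin.ext
      show (i * N + m.val) % N = m.val
      rw [Nat.mul_comm i N, Nat.mul_add_mod]
      exact Nat.mod_eq_of_lt m.isLt

    have hb := (hclaim t (Nat.le_add_right _ _) ht2).2 btilde hbt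
    rw [hm, hconst m.val m.isLt.le] at hb
    exact hb
end

section
/- Restricted search space for the best response: assume the popularities are non-increasing, a_1 ≥ a_2 ≥ … ≥ a_J. Fix a cache m and placements b^(ℓ) ∈ {0,1}^J of the other caches, let T = {j : b^(ℓ)_j = 1 for some ℓ ≠ m} and let S = max T (S = 0 if T is empty). Then there exists a minimizer b̄^(m) of f^(m)(·, b^(−m)) over {b ∈ {0,1}^J : Σ_{j=1}^J b_j = K} such that b̄^(m)_j = 0 for every file j > S + K; that is, a best response exists that stores only files among the first S + K most popular ones. -/
open Finset

lemma qm_update {N J : ℕ} (p : Finset (Fin N) → ℝ) (B : Fin N → Fin J → ℝ)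
    (m : Fin N) (b : Fin J → ℝ) (j : Fin J) :
    qm p (Function.update B m b) m j = qm p B m j := by
  unfold qm
  refine Finset.sum_congr rfl fun s hs => ?_
  congr 1
  refine Finset.prod_congr rfl fun ℓ hℓ => ?_
  rw [Function.update_of_ne (Finset.ne_of_mem_erase hℓ)]

theorem restricted_search_space (N J K : ℕ) (hK1 : 1 ≤ K) (hKJ : K ≤ J) (m : Fin N)
    (a : Fin J → ℝ) (ha : ∀ j, 0 ≤ a j) (hasum : ∑ j, a j = 1)
    (hmono : ∀ i j : Fin J, i ≤ j → a j ≤ a i)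
    (p : Finset (Fin N) → ℝ) (hp : ∀ s, 0 ≤ p s)
    (hpsum : ∑ s ∈ Finset.univ.filter (fun s : Finset (Fin N) => s.Nonempty), p s = 1)
    (B : Fin N → Fin J → ℝ)
    (hB : ∀ ℓ, ℓ ≠ m → ∀ j, B ℓ j = 0 ∨ B ℓ j = 1) :
    ∃ bbar : Fin J → ℝ, IsPlacement K bbar ∧
      (∀ b : Fin J → ℝ, IsPlacement K b →
        localMiss a p (Function.update B m bbar) m ≤
          localMiss a p (Function.update B m b) m) ∧
      (∀ j : Fin J,
        (Finset.univ.filter (fun j' : Fin J => ∃ ℓ, ℓ ≠ m ∧ B ℓ j' = 1)).sup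
            (fun j' => (j' : ℕ) + 1) + K < (j : ℕ) + 1 →
        bbar j = 0) := by
  classical
  set S : ℕ := (Finset.univ.filter (fun j' : Fin J => ∃ ℓ, ℓ ≠ m ∧ B ℓ j' = 1)).sup
      (fun j' => (j' : ℕ) + 1) with hS_def
  set q : Fin J → ℝ := fun j => qm p B m j with hq_def
  set Q : ℝ := ∑ s ∈ Finset.univ.filter (fun s : Finset (Fin N) => m ∈ s), p s with hQ_def
  set w : Fin J → ℝ := fun j => a j * q j with hw_def
  -- basic bounds on B for ℓ ≠ m
  have hB01 : ∀ ℓ, ℓ ≠ m → ∀ j, 0 ≤ B ℓ j ∧ B ℓ j ≤ 1 := by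
    intro ℓ hℓ j
    rcases hB ℓ hℓ j with h | h <;> simp [h]
  have hQ0 : 0 ≤ Q := Finset.sum_nonneg fun s _ => hp s
  have hq_nonneg : ∀ j, 0 ≤ q j := by
    intro j
    refine Finset.sum_nonneg fun s _ => mul_nonneg (hp s) (Finset.prod_nonneg fun ℓ hℓ => ?_)
    have := hB01 ℓ (Finset.ne_of_mem_erase hℓ) j
    linarith [this.2]
  have hq_le : ∀ j, q j ≤ Q := by
    intro j
    refine Finset.sum_le_sum fun s _ => ?_
    have hprod : ∏ ℓ ∈ s.erase m, (1 - B ℓ j) ≤ 1 := by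
      refine Finset.prod_le_one (fun ℓ hℓ => ?_) (fun ℓ hℓ => ?_)
      · have := hB01 ℓ (Finset.ne_of_mem_erase hℓ) j; linarith [this.2]
      · have := hB01 ℓ (Finset.ne_of_mem_erase hℓ) j; linarith [this.1]
    calc p s * ∏ ℓ ∈ s.erase m, (1 - B ℓ j) ≤ p s * 1 :=
          mul_le_mul_of_nonneg_left hprod (hp s)
      _ = p s := mul_one _
  have hq_eq : ∀ j : Fin J, S ≤ (j : ℕ) → q j = Q := by
    intro j hj
    refine Finset.sum_congr rfl fun s _ => ?_
    have hprod : ∏ ℓ ∈ s.erase m, (1 - B ℓ j) = 1 := by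
      refine Finset.prod_eq_one fun ℓ hℓ => ?_
      have hne := Finset.ne_of_mem_erase hℓ
      rcases hB ℓ hne j with h | h
      · rw [h]; ring
      · exfalso
        have hmem : j ∈ Finset.univ.filter (fun j' : Fin J => ∃ ℓ, ℓ ≠ m ∧ B ℓ j' = 1) :=
          Finset.mem_filter.2 ⟨Finset.mem_univ _, ⟨ℓ, hne, h⟩⟩
        have h2 : (j : ℕ) + 1 ≤ S := Finset.le_sup (f := fun j' : Fin J => (j' : ℕ) + 1) hmem
        omega
    rw [hprod, mul_one]
  -- the objective in linear form
  have hloc : ∀ b : Fin J → ℝ, localMiss a p (Function.update B m b) m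
      = (∑ j, a j * q j) - ∑ j, b j * w j := by
    intro b
    unfold localMiss
    rw [← Finset.sum_sub_distrib]
    refine Finset.sum_congr rfl fun j _ => ?_
    rw [Function.update_self, qm_update]
    simp only [hw_def, hq_def]
    ring
  -- placements give K-subsets
  have hplace : ∀ b : Fin J → ℝ, IsPlacement K b →
      ∃ C : Finset (Fin J), C.card = K ∧ ∑ j, b j * w j = ∑ j ∈ C, w j := by
    intro b hb
    obtain ⟨hb01, hbsum⟩ := hb
    refine ⟨Finset.univ.filter (fun j => b j = 1), ?_, ?_⟩
    · have h1 : ∑ j ∈ Finset.univ.filter (fun j => b j = 1), b j = ∑ j, b j := by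
        refine Finset.sum_filter_of_ne fun j _ hj => ?_
        rcases hb01 j with h | h
        · exact absurd h hj
        · exact h
      have h2 : ∑ j ∈ Finset.univ.filter (fun j => b j = 1), b j
          = ((Finset.univ.filter (fun j => b j = 1)).card : ℝ) := by
        rw [Finset.card_eq_sum_ones, Nat.cast_sum]
        refine Finset.sum_congr rfl fun j hj => ?_
        have := (Finset.mem_filter.1 hj).2
        simp [this]
      have : ((Finset.univ.filter (fun j => b j = 1)).card : ℝ) = (K : ℝ) := by
        rw [← h2, h1, hbsum]
      exact_mod_cast this
    · rw [← Finset.sum_filter_of_ne (s := Finset.univ) (f := fun j => b j * w j)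
        (p := fun j => b j = 1) (fun j _ hj => ?_)]
      · refine Finset.sum_congr rfl fun j hj => ?_
        have := (Finset.mem_filter.1 hj).2
        rw [this, one_mul]
      · rcases hb01 j with h | h
        · exact absurd (show b j * w j = 0 by rw [h, zero_mul]) hj
        · exact h
  -- the restricted universe
  set U : Finset (Fin J) := Finset.univ.filter (fun j : Fin J => (j : ℕ) < S + K) with hU_def
  have hUcard : K ≤ U.card := by
    have hsub : (Finset.univ.map ⟨Fin.castLE hKJ, Fin.castLE_injective hKJ⟩ : Finset (Fin J))
        ⊆ U := by
      intro x hx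
      obtain ⟨i, _, rfl⟩ := Finset.mem_map.1 hx
      refine Finset.mem_filter.2 ⟨Finset.mem_univ _, ?_⟩
      show (i : ℕ) < S + K
      have h2 := i.isLt
      omega
    calc K = (Finset.univ : Finset (Fin K)).card := by simp
      _ = (Finset.univ.map ⟨Fin.castLE hKJ, Fin.castLE_injective hKJ⟩ : Finset (Fin J)).card :=
          (Finset.card_map _).symm
      _ ≤ U.card := Finset.card_le_card hsub
  obtain ⟨A0, hA0U, hA0card⟩ := Finset.exists_subset_card_eq hUcard
  have hne : (U.powersetCard K).Nonempty :=
    ⟨A0, Finset.mem_powersetCard.2 ⟨hA0U, hA0card⟩⟩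
  obtain ⟨A, hA, hAmax⟩ := Finset.exists_max_image (U.powersetCard K)
    (fun t => ∑ j ∈ t, w j) hne
  obtain ⟨hAU, hAcard⟩ := Finset.mem_powersetCard.1 hA
  -- main combinatorial claim: A is a global maximizer
  have hmain : ∀ C : Finset (Fin J), C.card = K → ∑ j ∈ C, w j ≤ ∑ j ∈ A, w j := by
    intro C hC
    by_cases hsub : C ⊆ U
    · exact hAmax C (Finset.mem_powersetCard.2 ⟨hsub, hC⟩)
    · obtain ⟨j₀, hj₀C, hj₀U⟩ := Finset.not_subset.1 hsub
      have hj₀ : S + K ≤ (j₀ : ℕ) := by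
        by_contra h
        exact hj₀U (Finset.mem_filter.2 ⟨Finset.mem_univ _, by omega⟩)
      have hSKJ : S + K ≤ J := le_of_lt (lt_of_le_of_lt hj₀ j₀.isLt)
      have hSK1 : S + K - 1 < J := by omega
      set jlast : Fin J := ⟨S + K - 1, hSK1⟩ with hjlast_def
      set c : ℝ := a jlast * Q with hc_def
      set M : Finset (Fin J) :=
        Finset.univ.filter (fun i : Fin J => S ≤ (i : ℕ) ∧ (i : ℕ) < S + K) with hM_def
      have hMcard : M.card = K := by
        have hMeq : M = Finset.attachFin (Finset.Ico S (S + K))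
            (fun x hx => by have := Finset.mem_Ico.1 hx; omega) := by
          ext x
          simp [hM_def, Finset.mem_attachFin, Finset.mem_Ico]
        rw [hMeq, Finset.card_attachFin, Nat.card_Ico]
        omega
      have hMU : M ⊆ U := by
        intro x hx
        have := (Finset.mem_filter.1 hx).2
        exact Finset.mem_filter.2 ⟨Finset.mem_univ _, this.2⟩
      set Cin : Finset (Fin J) := C ∩ U with hCin_def
      set Cout : Finset (Fin J) := C \ U with hCout_def
      have hsplit : Cin.card + Cout.card = K := by
        rw [hCin_def, hCout_def, Finset.card_inter_add_card_sdiff]; exact hC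
      have hCinM : Cin.card ≤ K := by omega
      have h1 : Cout.card ≤ (M \ Cin).card := by
        have h2 := Finset.le_card_sdiff Cin M
        have h3 : Cin.card ≤ M.card + 0 := by
          -- not needed
          omega
        omega
      obtain ⟨D, hDM, hDcard⟩ := Finset.exists_subset_card_eq h1
      have hDdisj : Disjoint Cin D := by
        rw [Finset.disjoint_right]
        intro x hxD hxCin
        exact (Finset.mem_sdiff.1 (hDM hxD)).2 hxCin
      have hA'mem : (Cin ∪ D) ∈ U.powersetCard K := by
        refine Finset.mem_powersetCard.2 ⟨?_, ?_⟩
        · refine Finset.union_subset ?_ ?_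
          · exact (Finset.inter_subset_right)
          · exact fun x hx => hMU (Finset.mem_sdiff.1 (hDM hx)).1
        · rw [Finset.card_union_of_disjoint hDdisj, hDcard, hsplit]
      -- weight comparisons
      have hCout_le : ∀ j ∈ Cout, w j ≤ c := by
        intro j hj
        have hjU : j ∉ U := (Finset.mem_sdiff.1 hj).2
        have hjge : S + K ≤ (j : ℕ) := by
          by_contra h
          exact hjU (Finset.mem_filter.2 ⟨Finset.mem_univ _, by omega⟩)
        have hle : jlast ≤ j := by
          rw [Fin.le_def]; simp [hjlast_def]; omega
        simp only [hw_def, hc_def]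
        calc a j * q j ≤ a j * Q := mul_le_mul_of_nonneg_left (hq_le j) (ha j)
          _ ≤ a jlast * Q := mul_le_mul_of_nonneg_right (hmono jlast j hle) hQ0
      have hD_ge : ∀ i ∈ D, c ≤ w i := by
        intro i hi
        have hiM : i ∈ M := (Finset.mem_sdiff.1 (hDM hi)).1
        obtain ⟨hiS, hiSK⟩ := (Finset.mem_filter.1 hiM).2
        have hqi : q i = Q := hq_eq i hiS
        have hle : i ≤ jlast := by
          rw [Fin.le_def]; simp [hjlast_def]; omega
        simp only [hw_def, hc_def, hqi]
        exact mul_le_mul_of_nonneg_right (hmono i jlast hle) hQ0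
      have hsum1 : ∑ j ∈ Cout, w j ≤ ∑ j ∈ D, w j := by
        calc ∑ j ∈ Cout, w j ≤ Cout.card • c := Finset.sum_le_card_nsmul _ _ _ hCout_le
          _ = D.card • c := by rw [hDcard]
          _ ≤ ∑ j ∈ D, w j := Finset.card_nsmul_le_sum _ _ _ hD_ge
      calc ∑ j ∈ C, w j = ∑ j ∈ Cin, w j + ∑ j ∈ Cout, w j :=
            (Finset.sum_inter_add_sum_sdiff C U w).symm
        _ ≤ ∑ j ∈ Cin, w j + ∑ j ∈ D, w j := by linarith
        _ = ∑ j ∈ Cin ∪ D, w j := (Finset.sum_union hDdisj).symm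
        _ ≤ ∑ j ∈ A, w j := hAmax _ hA'mem
  -- assemble
  refine ⟨fun j => if j ∈ A then (1 : ℝ) else 0, ⟨?_, ?_⟩, ?_, ?_⟩
  · intro j
    by_cases h : j ∈ A <;> simp [h]
  · rw [Finset.sum_ite_mem, Finset.univ_inter, Finset.sum_const, hAcard]
    simp
  · intro b hb
    rw [hloc, hloc]
    have hbbar : ∑ j, (if j ∈ A then (1 : ℝ) else 0) * w j = ∑ j ∈ A, w j := by
      calc ∑ j, (if j ∈ A then (1 : ℝ) else 0) * w j
          = ∑ j, (if j ∈ A then w j else 0) := by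
            refine Finset.sum_congr rfl fun j _ => ?_
            by_cases h : j ∈ A <;> simp [h]
        _ = ∑ j ∈ Finset.univ ∩ A, w j := Finset.sum_ite_mem _ _ _
        _ = ∑ j ∈ A, w j := by rw [Finset.univ_inter]
    obtain ⟨C, hCcard, hCsum⟩ := hplace b hb
    rw [hbbar, hCsum]
    have := hmain C hCcard
    linarith
  · intro j hj
    have hjA : j ∉ A := by
      intro hmem
      obtain ⟨-, h2⟩ := Finset.mem_filter.1 (hAU hmem)
      omega
    simp [hjA]
end
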